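/- For all Q, R > 0, there is a constant C₁ = C₁(Q,R) > 0 such that if V : ℝ → ℝ is continuous with ‖V‖_∞ ≤ Q, E ∈ ℂ satisfies |E| ≤ R, and u : ℝ → ℂ is a twice differentiable function satisfying -u'' + Vu = Eu, then |u'(x)|² ≤ C₁ ∫_{x-1}^{x+1} |u(t)|² dt for all x ∈ ℝ. -/

import Mathlib

open MeasureTheory Filter Set BoundedContinuousFunction
open scoped ENNReal

noncomputable section

/-- For all `Q, R > 0` there is `C₁ = C₁(Q,R) > 0` such that: if `V` is
continuous with `‖V‖_∞ ≤ Q`, `|E| ≤ R`, and `u` is twice differentiable with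
`-u'' + Vu = Eu` pointwise, then `|u'(x)|² ≤ C₁ ∫_{x-1}^{x+1} |u(t)|² dt` for all `x`. -/
theorem solution_derivative_estimate (Q R : ℝ) (hQ : 0 < Q) (hR : 0 < R) :
    ∃ C₁ : ℝ, 0 < C₁ ∧
      ∀ V : ℝ → ℝ, Continuous V → (∀ x : ℝ, |V x| ≤ Q) →
      ∀ E : ℂ, ‖E‖ ≤ R →
      ∀ u : ℝ → ℂ, Differentiable ℝ u → Differentiable ℝ (deriv u) →
        (∀ x : ℝ, -deriv (deriv u) x + (V x : ℂ) * u x = E * u x) →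
        ∀ x : ℝ, ‖deriv u x‖ ^ 2 ≤ C₁ * ∫ t in (x - 1)..(x + 1), ‖u t‖ ^ 2 := by
  set C : ℝ := 3/2 * (1 + 2*(Q+R)) with hCdef
  have hCpos : 0 < C := by positivity
  refine ⟨2 * C^2, by positivity, ?_⟩
  intro V hVc hVQ E hE u hu1 hu2 hODE x
  set W : ℝ → ℂ := fun s => ((V s : ℂ) - E) * u s with hWdef
  have hucont : Continuous u := hu1.continuous
  have hWc : Continuous W :=
    ((Complex.continuous_ofReal.comp hVc).sub continuous_const).mul hucont
  have hW : ∀ s, deriv (deriv u) s = W s := by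
    intro s
    have h := hODE s
    simp only [hWdef]
    linear_combination -h
  have hnormu : Continuous fun t => ‖u t‖ := hucont.norm
  set S : ℝ := ∫ t in (x-1)..(x+1), ‖u t‖ with hSdef
  set T : ℝ := ∫ t in (x-1)..(x+1), ‖u t‖^2 with hTdef
  have hSnn : 0 ≤ S :=
    intervalIntegral.integral_nonneg (by linarith) (fun t _ => norm_nonneg _)
  have hSint : IntervalIntegrable (fun t => ‖u t‖) volume (x-1) (x+1) :=
    hnormu.intervalIntegrable _ _
  -- bound on W
  have hWbd : ∀ s : ℝ, ‖W s‖ ≤ (Q+R) * ‖u s‖ := by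
    intro s
    simp only [hWdef, norm_mul]
    have h1 : ‖(V s : ℂ) - E‖ ≤ Q + R := by
      calc ‖(V s : ℂ) - E‖ ≤ ‖(V s : ℂ)‖ + ‖E‖ := norm_sub_le _ _
        _ ≤ Q + R := add_le_add (by simpa [Complex.norm_real] using hVQ s) hE
    exact mul_le_mul_of_nonneg_right h1 (norm_nonneg _)
  -- Taylor with integral remainder
  have taylor : ∀ t : ℝ, u t - u x - ((t:ℂ) - x) * deriv u x
      = ∫ s in x..t, ((t:ℂ) - s) * W s := by
    intro t
    have key : ∀ s : ℝ, HasDerivAt (fun s : ℝ => u s + ((t : ℂ) - s) * deriv u s)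
        (((t : ℂ) - s) * W s) s := by
      intro s
      have h1 : HasDerivAt u (deriv u s) s := (hu1 s).hasDerivAt
      have h2 : HasDerivAt (deriv u) (W s) s := hW s ▸ (hu2 s).hasDerivAt
      have h3 : HasDerivAt (fun s : ℝ => ((t : ℂ) - s)) (-1) s := by
        have h4 : HasDerivAt (fun s : ℝ => (s : ℂ)) 1 s := by
          exact Complex.ofRealCLM.hasDerivAt (x := s)
        exact (zero_sub (1:ℂ)) ▸ (hasDerivAt_const s (t : ℂ)).sub h4
      have := h1.add (h3.mul h2)
      exact this.congr_deriv (by ring)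
    have hint : IntervalIntegrable (fun s => ((t : ℂ) - s) * W s) volume x t :=
      (Continuous.mul (by continuity) hWc).intervalIntegrable _ _
    have := intervalIntegral.integral_eq_sub_of_hasDerivAt (fun s _ => key s) hint
    rw [this]; ring
  set r : ℝ → ℂ := fun t => u t - u x - ((t:ℂ) - x) * deriv u x with hrdef
  have hrc : Continuous r := by
    apply Continuous.sub (hucont.sub continuous_const)
    exact ((Complex.continuous_ofReal.sub continuous_const).mul continuous_const)
  -- bound on the remainder
  have hrbd : ∀ t : ℝ, t ∈ Set.uIoc (x-1) (x+1) → ‖r t‖ ≤ (Q+R) * S := by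
    intro t ht
    rw [Set.uIoc_of_le (by linarith)] at ht
    have htx : |t - x| ≤ 1 := by
      rw [abs_le]; constructor <;> [linarith [ht.1]; linarith [ht.2]]
    have hsub : Set.uIoc x t ⊆ Set.uIoc (x-1) (x+1) := by
      rw [Set.uIoc_of_le (show x - 1 ≤ x + 1 by linarith)]
      intro s hs
      rcases Set.mem_uIoc.1 hs with h | h
      · exact ⟨by linarith [h.1], by linarith [h.2, ht.2]⟩
      · exact ⟨by linarith [h.1, ht.1], by linarith [h.2]⟩
    have hb : ∀ s ∈ Set.uIoc x t, ‖((t:ℂ) - s) * W s‖ ≤ (Q+R) * ‖u s‖ := by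
      intro s hs
      rw [norm_mul]
      have hts : ‖((t:ℂ) - s)‖ ≤ 1 := by
        rw [show ((t:ℂ) - s) = ((t - s : ℝ) : ℂ) by push_cast; ring, Complex.norm_real,
          Real.norm_eq_abs]
        rcases Set.mem_uIoc.1 hs with h | h
        · rw [abs_le]; constructor <;> [linarith [h.2, (abs_le.1 htx).2]; linarith [h.1, (abs_le.1 htx).2]]
        · rw [abs_le]; constructor <;> [linarith [h.2, (abs_le.1 htx).1]; linarith [h.1, (abs_le.1 htx).1]]
      calc ‖((t:ℂ) - s)‖ * ‖W s‖ ≤ 1 * ((Q+R) * ‖u s‖) :=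
            mul_le_mul hts (hWbd s) (norm_nonneg _) one_pos.le
        _ = (Q+R) * ‖u s‖ := one_mul _
    have hgint : IntervalIntegrable (fun s => (Q+R) * ‖u s‖) volume x t :=
      (continuous_const.mul hnormu).intervalIntegrable _ _
    have h5 : ‖∫ s in x..t, ((t:ℂ) - s) * W s‖ ≤ |∫ s in x..t, (Q+R) * ‖u s‖| :=
      intervalIntegral.norm_integral_le_abs_of_norm_le (ae_restrict_of_forall_mem measurableSet_uIoc hb) hgint
    have h6 : |∫ s in x..t, (Q+R) * ‖u s‖| ≤ |∫ s in (x-1)..(x+1), (Q+R) * ‖u s‖| :=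
      intervalIntegral.abs_integral_mono_interval hsub
        (Eventually.of_forall (fun s => by positivity))
        ((continuous_const.mul hnormu).intervalIntegrable _ _)
    have h7 : (∫ s in (x-1)..(x+1), (Q+R) * ‖u s‖) = (Q+R) * S := by
      rw [hSdef, intervalIntegral.integral_const_mul]
    simp only [hrdef]
    rw [taylor t]
    calc ‖∫ s in x..t, ((t:ℂ) - s) * W s‖ ≤ |∫ s in (x-1)..(x+1), (Q+R) * ‖u s‖| := h5.trans h6
      _ = (Q+R) * S := by rw [h7, abs_of_nonneg (by positivity)]
  -- moment integrals
  have hm1 : (∫ t in (x-1)..(x+1), ((t:ℂ) - x)) = 0 := by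
    have e1 : (∫ t in (x-1)..(x+1), ((t:ℂ) - x)) = ((∫ t in (x-1)..(x+1), (t - x : ℝ) : ℝ) : ℂ) := by
      rw [← intervalIntegral.integral_ofReal]; push_cast; rfl
    rw [e1, intervalIntegral.integral_comp_sub_right (fun s => s) x]
    norm_num [integral_id]
  have hm2 : (∫ t in (x-1)..(x+1), ((t:ℂ) - x)^2) = 2/3 := by
    have e1 : (∫ t in (x-1)..(x+1), ((t:ℂ) - x)^2)
        = ((∫ t in (x-1)..(x+1), ((t - x : ℝ))^2 : ℝ) : ℂ) := by
      rw [← intervalIntegral.integral_ofReal]; push_cast; rfl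
    rw [e1, intervalIntegral.integral_comp_sub_right (fun s => s^2) x]
    norm_num [integral_pow]
  -- expansion of the first moment of u
  have hcoe : Continuous fun t : ℝ => ((t:ℂ) - x) := by continuity
  have hint1 : IntervalIntegrable (fun t => ((t:ℂ) - x) * u x) volume (x-1) (x+1) :=
    (hcoe.mul continuous_const).intervalIntegrable _ _
  have hint2 : IntervalIntegrable (fun t => ((t:ℂ) - x)^2 * deriv u x) volume (x-1) (x+1) :=
    ((hcoe.pow 2).mul continuous_const).intervalIntegrable _ _
  have hint3 : IntervalIntegrable (fun t => ((t:ℂ) - x) * r t) volume (x-1) (x+1) :=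
    (hcoe.mul hrc).intervalIntegrable _ _
  have expand : (∫ t in (x-1)..(x+1), ((t:ℂ) - x) * u t)
      = (2/3 : ℂ) * deriv u x + ∫ t in (x-1)..(x+1), ((t:ℂ) - x) * r t := by
    have e0 : ∀ t : ℝ, ((t:ℂ) - x) * u t
        = ((t:ℂ) - x) * u x + ((t:ℂ) - x)^2 * deriv u x + ((t:ℂ) - x) * r t := by
      intro t; simp only [hrdef]; ring
    rw [intervalIntegral.integral_congr (fun t _ => e0 t),
      intervalIntegral.integral_add (hint1.add hint2) hint3,
      intervalIntegral.integral_add hint1 hint2,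
      intervalIntegral.integral_mul_const, intervalIntegral.integral_mul_const, hm1, hm2]
    ring
  have hkey : deriv u x = (3/2 : ℂ) * ((∫ t in (x-1)..(x+1), ((t:ℂ) - x) * u t)
      - ∫ t in (x-1)..(x+1), ((t:ℂ) - x) * r t) := by
    linear_combination (-3/2 : ℂ) * expand
  -- norm bounds
  have hI : ‖∫ t in (x-1)..(x+1), ((t:ℂ) - x) * u t‖ ≤ S := by
    have hb : ∀ t ∈ Set.uIoc (x-1) (x+1), ‖((t:ℂ) - x) * u t‖ ≤ ‖u t‖ := by
      intro t ht
      rw [Set.uIoc_of_le (by linarith)] at ht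
      rw [norm_mul, show ((t:ℂ) - x) = ((t - x : ℝ) : ℂ) by push_cast; ring, Complex.norm_real, Real.norm_eq_abs]
      have : |t - x| ≤ 1 := by rw [abs_le]; constructor <;> [linarith [ht.1]; linarith [ht.2]]
      calc |t - x| * ‖u t‖ ≤ 1 * ‖u t‖ := mul_le_mul_of_nonneg_right this (norm_nonneg _)
        _ = ‖u t‖ := one_mul _
    have := intervalIntegral.norm_integral_le_abs_of_norm_le
      (ae_restrict_of_forall_mem measurableSet_uIoc hb) hSint
    rwa [abs_of_nonneg hSnn] at this
  have hJ : ‖∫ t in (x-1)..(x+1), ((t:ℂ) - x) * r t‖ ≤ 2 * ((Q+R) * S) := by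
    have hb : ∀ t ∈ Set.uIoc (x-1) (x+1), ‖((t:ℂ) - x) * r t‖ ≤ (Q+R) * S := by
      intro t ht
      have htx : |t - x| ≤ 1 := by
        rw [Set.uIoc_of_le (by linarith)] at ht
        rw [abs_le]; constructor <;> [linarith [ht.1]; linarith [ht.2]]
      rw [norm_mul, show ((t:ℂ) - x) = ((t - x : ℝ) : ℂ) by push_cast; ring, Complex.norm_real, Real.norm_eq_abs]
      calc |t - x| * ‖r t‖ ≤ 1 * ((Q+R) * S) :=
            mul_le_mul htx (hrbd t ht) (norm_nonneg _) one_pos.le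
        _ = (Q+R) * S := one_mul _
    have := intervalIntegral.norm_integral_le_of_norm_le_const hb
    calc ‖∫ t in (x-1)..(x+1), ((t:ℂ) - x) * r t‖ ≤ (Q+R) * S * |x + 1 - (x - 1)| := this
      _ = 2 * ((Q+R) * S) := by rw [show x + 1 - (x - 1) = (2:ℝ) by ring, abs_of_nonneg (by norm_num : (0:ℝ) ≤ 2)]; ring
  have hderiv_bd : ‖deriv u x‖ ≤ C * S := by
    rw [hkey, norm_mul]
    have h32 : ‖(3/2 : ℂ)‖ = 3/2 := by
      rw [show (3/2 : ℂ) = ((3/2 : ℝ) : ℂ) by norm_num, Complex.norm_real]; norm_num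
    rw [h32]
    calc (3/2) * ‖(∫ t in (x-1)..(x+1), ((t:ℂ) - x) * u t)
          - ∫ t in (x-1)..(x+1), ((t:ℂ) - x) * r t‖
        ≤ (3/2) * (‖∫ t in (x-1)..(x+1), ((t:ℂ) - x) * u t‖
          + ‖∫ t in (x-1)..(x+1), ((t:ℂ) - x) * r t‖) := by
          gcongr; exact norm_sub_le _ _
      _ ≤ (3/2) * (S + 2 * ((Q+R) * S)) := by gcongr
      _ = C * S := by rw [hCdef]; ring
  -- Cauchy–Schwarz : S^2 ≤ 2 T
  have hCS : S^2 ≤ 2 * T := by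
    have h0 : 0 ≤ ∫ t in (x-1)..(x+1), (‖u t‖ - S/2)^2 :=
      intervalIntegral.integral_nonneg (by linarith) (fun t _ => sq_nonneg _)
    have h1 : IntervalIntegrable (fun t => ‖u t‖^2) volume (x-1) (x+1) :=
      (hnormu.pow 2).intervalIntegrable _ _
    have h2 : IntervalIntegrable (fun t => S * ‖u t‖) volume (x-1) (x+1) :=
      (continuous_const.mul hnormu).intervalIntegrable _ _
    have e0 : (fun t => (‖u t‖ - S/2)^2) = fun t => ‖u t‖^2 - S * ‖u t‖ + (S/2)^2 := by
      funext t; ring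
    have hexp : (∫ t in (x-1)..(x+1), (‖u t‖ - S/2)^2) = T - S*S + (S/2)^2 * 2 := by
      rw [e0, intervalIntegral.integral_add (h1.sub h2) intervalIntegrable_const,
        intervalIntegral.integral_sub h1 h2, intervalIntegral.integral_const_mul,
        intervalIntegral.integral_const, ← hSdef, ← hTdef]
      simp [smul_eq_mul]; ring
    nlinarith [hexp ▸ h0]
  have : ‖deriv u x‖^2 ≤ (C * S)^2 := by
    apply pow_le_pow_left₀ (norm_nonneg _) hderiv_bd
  calc ‖deriv u x‖^2 ≤ (C * S)^2 := this
    _ = C^2 * S^2 := by ring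
    _ ≤ C^2 * (2 * T) := by gcongr
    _ = 2 * C^2 * T := by ring
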